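/- (Single-step selection of the reward.) Along the augmented trajectory with τ ≥ 0, the reward r(S_k) is nonzero for at most one index k, namely k = N = ⌊τ/Δt⌋; i.e., r(S_k) = 0 for all k ≠ N, and consequently Σ_{k=0}^∞ r(S_k) = r(S_N). -/
import Mathlib


open scoped Classical

/-- A pair `(h, y)` is absorbing iff `h < 0` or `y ∉ C`. -/
def IsAbsorbing {𝒳 : Type*} (C : Set 𝒳) (s : ℝ × 𝒳) : Prop :=
  s.1 < 0 ∨ s.2 ∉ C

/-- Reward: `1` if `0 ≤ h < Δt` and `(h, y)` is not absorbing, else `0`. -/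
noncomputable def reward {𝒳 : Type*} (C : Set 𝒳) (Δt : ℝ) (s : ℝ × 𝒳) : ℝ :=
  if 0 ≤ s.1 ∧ s.1 < Δt ∧ ¬ IsAbsorbing C s then 1 else 0

/-- The augmented trajectory built from a realized trajectory `x`. -/
noncomputable def augTraj {𝒳 : Type*} (C : Set 𝒳) (Δt τ : ℝ) (x : ℕ → 𝒳) : ℕ → ℝ × 𝒳
  | 0 => (τ, x 0)
  | k + 1 =>
      if IsAbsorbing C (augTraj C Δt τ x k) then augTraj C Δt τ x k
      else ((augTraj C Δt τ x k).1 - Δt, x (k + 1))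

lemma augTraj_fst {𝒳 : Type*} (C : Set 𝒳) (Δt τ : ℝ) (x : ℕ → 𝒳) (k : ℕ) :
    IsAbsorbing C (augTraj C Δt τ x k) ∨ (augTraj C Δt τ x k).1 = τ - k * Δt := by
  induction k with
  | zero => right; simp [augTraj]
  | succ n ih =>
    by_cases h : IsAbsorbing C (augTraj C Δt τ x n)
    · left; simp [augTraj, h]
    · rcases ih with h' | h'
      · exact absurd h' h
      · by_cases h2 : IsAbsorbing C (augTraj C Δt τ x (n + 1))
        · left; exact h2
        · right
          simp only [augTraj, if_neg h, h']
          push_cast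
          ring

theorem stmt_16 {𝒳 : Type*} (C : Set 𝒳) (Δt τ : ℝ) (hΔt : 0 < Δt) (hτ : 0 ≤ τ)
    (x : ℕ → 𝒳) :
    (∀ k : ℕ, k ≠ ⌊τ / Δt⌋₊ → reward C Δt (augTraj C Δt τ x k) = 0) ∧
    ∑' k : ℕ, reward C Δt (augTraj C Δt τ x k) =
      reward C Δt (augTraj C Δt τ x ⌊τ / Δt⌋₊) := by
  have key : ∀ k : ℕ, k ≠ ⌊τ / Δt⌋₊ → reward C Δt (augTraj C Δt τ x k) = 0 := by
    intro k hk
    rw [reward, if_neg]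
    rintro ⟨h0, h1, h2⟩
    rcases augTraj_fst C Δt τ x k with h | h
    · exact h2 h
    · rw [h] at h0 h1
      apply hk
      symm
      rw [Nat.floor_eq_iff (by positivity)]
      constructor
      · rw [le_div_iff₀ hΔt]; linarith
      · rw [div_lt_iff₀ hΔt]; push_cast; linarith
  exact ⟨key, tsum_eq_single _ key⟩
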